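/- arXiv:2001.11270 — 2 statements merged into one kernel-verified Lean document; each statement's English description precedes it below -/
import Mathlib

section
/- Let B(P,L) be the 6×6 real matrix B = -[[0, P̂],[P̂, L̂]] (in 3×3 blocks), where for v ∈ ℝ³ the matrix v̂ is defined by v̂u = v × u. Define G(P,L) = |L|² - a²(P₁² + P₂²) and L_z(P,L) = L₃ on ℝ³ × ℝ³. Then for every (P,L) ∈ ℝ³ × ℝ³ and every a ∈ ℝ, the Poisson bracket {L_z, G}(P,L) := (∇L_z)ᵀ B(P,L) (∇G) vanishes, where ∇ denotes the gradient with respect to the six variables (P₁,P₂,P₃,L₁,L₂,L₃). In particular L_z and G Poisson commute with respect to the Lie–Poisson structure of e*(3), so they define a Liouville integrable system (the spheroidal harmonics integrable system). -/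
open Matrix

noncomputable section

/-- For `v ∈ ℝ³`, the antisymmetric hat matrix with `v̂ u = v × u`. -/
def hat (v : Fin 3 → ℝ) : Matrix (Fin 3) (Fin 3) ℝ :=
  !![0, -v 2, v 1; v 2, 0, -v 0; -v 1, v 0, 0]

/-- The Lie–Poisson structure matrix of `e*(3)`:  `B = -[[0, P̂],[P̂, L̂]]`. -/
def Bmat (P L : Fin 3 → ℝ) : Matrix (Fin 3 ⊕ Fin 3) (Fin 3 ⊕ Fin 3) ℝ :=
  - Matrix.fromBlocks 0 (hat P) (hat P) (hat L)

/-- `ℝ⁶` as a Euclidean (inner product) space, with the first three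
coordinates `P` and the last three coordinates `L`. -/
abbrev R6 := EuclideanSpace ℝ (Fin 3 ⊕ Fin 3)

def Pof (w : R6) : Fin 3 → ℝ := fun i => w (Sum.inl i)

def Lof (w : R6) : Fin 3 → ℝ := fun i => w (Sum.inr i)

/-- `G(P,L) = |L|² - a²(P₁² + P₂²)`. -/
def Gfun (a : ℝ) : R6 → ℝ := fun w =>
  (Lof w 0) ^ 2 + (Lof w 1) ^ 2 + (Lof w 2) ^ 2 - a ^ 2 * ((Pof w 0) ^ 2 + (Pof w 1) ^ 2)

/-- `L_z(P,L) = L₃`. -/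
def Lzfun : R6 → ℝ := fun w => Lof w 2

/-- A coordinate of the gradient equals the Fréchet derivative applied to the
corresponding basis vector. -/
lemma gradient_apply {f : R6 → ℝ} {w : R6} (i : Fin 3 ⊕ Fin 3) :
    gradient f w i = fderiv ℝ f w (EuclideanSpace.single i 1) := by
  have h : gradient f w i = @inner ℝ _ _ (gradient f w) (EuclideanSpace.single i (1:ℝ)) := by
    rw [EuclideanSpace.inner_single_right]; simp
  rw [h, gradient, InnerProductSpace.toDual_symm_apply]

/-- The projection onto coordinate `i` as a continuous linear map. -/
def pr (i : Fin 3 ⊕ Fin 3) : R6 →L[ℝ] ℝ := EuclideanSpace.proj i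

lemma hasFDerivAt_Lz (w : R6) : HasFDerivAt Lzfun (pr (Sum.inr 2)) w :=
  (pr (Sum.inr 2)).hasFDerivAt

lemma hasFDerivAt_G (a : ℝ) (w : R6) :
    HasFDerivAt (Gfun a)
      ((2 * Lof w 0) • pr (Sum.inr 0) + (2 * Lof w 1) • pr (Sum.inr 1)
        + (2 * Lof w 2) • pr (Sum.inr 2)
        - a ^ 2 • ((2 * Pof w 0) • pr (Sum.inl 0) + (2 * Pof w 1) • pr (Sum.inl 1))) w := by
  have h : ∀ i : Fin 3 ⊕ Fin 3,
      HasFDerivAt (fun v : R6 => v i ^ 2) ((2 * w i) • pr i) w := by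
    intro i
    have := ((pr i).hasFDerivAt (x := w)).mul ((pr i).hasFDerivAt (x := w))
    have h2 : (fun v : R6 => v i ^ 2) = fun v : R6 => pr i v * pr i v := by
      ext v; simp [pr, sq]
    rw [h2]
    refine this.congr_fderiv ?_
    ext v
    simp only [ContinuousLinearMap.smul_apply, ContinuousLinearMap.add_apply, smul_eq_mul, pr,
      PiLp.proj_apply]
    ring
  have H := (((h (Sum.inr 0)).add (h (Sum.inr 1))).add (h (Sum.inr 2))).sub
    (((h (Sum.inl 0)).add (h (Sum.inl 1))).const_smul (a ^ 2))
  have hfun : Gfun a = fun v : R6 => ((v (Sum.inr 0) ^ 2 + v (Sum.inr 1) ^ 2) + v (Sum.inr 2) ^ 2)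
      - a ^ 2 • (v (Sum.inl 0) ^ 2 + v (Sum.inl 1) ^ 2) := by
    ext v; simp only [Gfun, Lof, Pof, smul_eq_mul]
  rw [hfun]
  exact H

/-- The Poisson bracket `{L_z, G} = (∇L_z)ᵀ B (∇G)` vanishes identically, so the
spheroidal harmonics integrable system `(L_z, G)` Poisson commutes on `e*(3)`. -/
theorem lz_G_poisson_commute (a : ℝ) (w : R6) :
    dotProduct (fun i => gradient Lzfun w i)
      ((Bmat (Pof w) (Lof w)).mulVec (fun i => gradient (Gfun a) w i)) = 0 := by
  have hLz : ∀ i, gradient Lzfun w i = (if i = Sum.inr 2 then 1 else 0) := by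
    intro i
    rw [gradient_apply i, (hasFDerivAt_Lz w).fderiv]
    simp [pr, EuclideanSpace.single_apply, eq_comm]
  have hG : ∀ i, gradient (Gfun a) w i =
      Sum.elim (fun j : Fin 3 => -(a ^ 2) * (2 * (if j = 0 then Pof w 0 else 0)
          + 2 * (if j = 1 then Pof w 1 else 0)))
        (fun j : Fin 3 => 2 * (if j = 0 then Lof w 0 else 0)
          + 2 * (if j = 1 then Lof w 1 else 0) + 2 * (if j = 2 then Lof w 2 else 0)) i := by
    intro i
    rw [gradient_apply i, (hasFDerivAt_G a w).fderiv]
    rcases i with j | j <;>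
      simp [pr, EuclideanSpace.single_apply, eq_comm] <;> split_ifs <;> ring
  simp only [dotProduct, Fintype.sum_sum_type, hLz, hG]
  simp only [Matrix.mulVec, dotProduct, Fintype.sum_sum_type, Bmat, hat,
    Matrix.neg_apply, Matrix.fromBlocks_apply₁₁, Matrix.fromBlocks_apply₁₂,
    Matrix.fromBlocks_apply₂₁, Matrix.fromBlocks_apply₂₂, Matrix.zero_apply]
  simp [Fin.sum_univ_three, Matrix.cons_val_zero, Matrix.cons_val_one]
  ring
end
end

section
/- Let γ > 0 and take m = 0, so C₃(b) = (1-b₁²)b₂ - b₃² and G_red(b) = b₂ - γ²(1-b₁²). Then the set {b ∈ ℝ³ : C₃(b) = 0, G_red(b) = 0, b₂ ≥ 0, b₁² ≤ 1} equals exactly the union of the two parabolic arcs { (b₁, γ²(1-b₁²), γ(1-b₁²)) : b₁ ∈ [-1,1] } ∪ { (b₁, γ²(1-b₁²), -γ(1-b₁²)) : b₁ ∈ [-1,1] }. These arcs are the separatrices connecting the two singular points (±1,0,0) of the singular reduced phase space P₀, and their preimage in full phase space is the doubly pinched torus over the focus-focus value (0,0). -/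
noncomputable section

/-- For `m = 0` and `γ > 0`: the intersection of the singular reduced phase space
`P₀ = {C₃ = 0, b₂ ≥ 0, b₁² ≤ 1}` (with `C₃(b) = (1-b₁²)b₂ - b₃²`) with the reduced
energy surface `{G_red = 0}` (with `G_red(b) = b₂ - γ²(1-b₁²)`) is exactly the union
of the two parabolic arcs `b = (b₁, γ²(1-b₁²), ±γ(1-b₁²))`, `b₁ ∈ [-1,1]` — the
separatrices connecting the singular points `(±1,0,0)`. -/
theorem separatrix_arcs (γ : ℝ) (hγ : 0 < γ) :
    {b : Fin 3 → ℝ |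
        (1 - (b 0) ^ 2) * b 1 - (b 2) ^ 2 = 0 ∧
        b 1 - γ ^ 2 * (1 - (b 0) ^ 2) = 0 ∧
        0 ≤ b 1 ∧ (b 0) ^ 2 ≤ 1} =
      {b : Fin 3 → ℝ | ∃ t ∈ Set.Icc (-1 : ℝ) 1,
        b = ![t, γ ^ 2 * (1 - t ^ 2), γ * (1 - t ^ 2)] ∨
        b = ![t, γ ^ 2 * (1 - t ^ 2), -(γ * (1 - t ^ 2))]} := by
  ext b
  simp only [Set.mem_setOf_eq]
  constructor
  · rintro ⟨hC, hG, hb2, hb1⟩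
    refine ⟨b 0, ?_, ?_⟩
    · constructor <;> nlinarith [sq_nonneg (b 0 - 1), sq_nonneg (b 0 + 1)]
    · have h2 : b 1 = γ ^ 2 * (1 - (b 0) ^ 2) := by linarith
      have h3 : (b 2) ^ 2 = (γ * (1 - (b 0) ^ 2)) ^ 2 := by nlinarith
      rcases (sq_eq_sq_iff_eq_or_eq_neg.mp h3 :
          b 2 = γ * (1 - (b 0) ^ 2) ∨ b 2 = -(γ * (1 - (b 0) ^ 2))) with h | h
      · left
        funext i
        fin_cases i <;> simp [h2, h]
      · right
        funext i
        fin_cases i <;> simp [h2, h]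
  · rintro ⟨t, ht, h | h⟩ <;> subst h <;>
      simp only [Matrix.cons_val_zero, Matrix.cons_val_one, Matrix.head_cons,
        Matrix.cons_val_two, Matrix.tail_cons] <;>
      refine ⟨by ring, by ring, ?_, ?_⟩ <;>
      nlinarith [mul_nonneg (sq_nonneg γ) (by nlinarith [ht.1, ht.2] : (0:ℝ) ≤ 1 - t ^ 2), ht.1, ht.2]
end
end
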